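/- Let n ≥ 2, λ ∈ ℝ, and let g be the Lie algebra with pseudo-orthonormal basis x₁,…,xₙ (with ⟨xᵢ,xᵢ⟩ = εᵢ ∈ {±1}, ⟨xᵢ,xⱼ⟩ = 0 for i ≠ j) satisfying [x₁,xᵢ] = xᵢ (2 ≤ i ≤ n−1), [x₁,xₙ] = −λx₁ + xₙ, [xᵢ,xₙ] = −λxᵢ (2 ≤ i ≤ n−1), other brackets zero. Then the Levi-Civita connection ∇ (defined by the Koszul formula on the metric Lie algebra) satisfies ∇_{x₁}x₁ = λε₁εₙxₙ, ∇_{x₁}xᵢ = 0, ∇_{x₁}xₙ = −λx₁, ∇_{xᵢ}x₁ = −xᵢ, ∇_{xᵢ}xⱼ = δᵢⱼεᵢ(ε₁x₁ + λεₙxₙ), ∇_{xᵢ}xₙ = −λxᵢ, ∇_{xₙ}x₁ = −xₙ, ∇_{xₙ}xᵢ = 0, ∇_{xₙ}xₙ = ε₁εₙx₁, for 2 ≤ i,j ≤ n−1. -/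

import Mathlib

theorem stmt_12 (n : ℕ) (hn : 2 ≤ n) (lam : ℝ)
    {L : Type*} [LieRing L] [LieAlgebra ℝ L]
    (B : LinearMap.BilinForm ℝ L) (hBsymm : ∀ X Y : L, B X Y = B Y X)
    (x : Module.Basis (Fin n) ℝ L) (ε : Fin n → ℝ) (hε : ∀ i, ε i = 1 ∨ ε i = -1)
    (hortho : ∀ i j : Fin n, B (x i) (x j) = if i = j then ε i else 0)
    (z ℓ : Fin n) (hz : (z : ℕ) = 0) (hℓ : (ℓ : ℕ) = n - 1)
    (hx1 : ∀ i : Fin n, i ≠ z → i ≠ ℓ → ⁅x z, x i⁆ = x i)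
    (hx2 : ⁅x z, x ℓ⁆ = -lam • x z + x ℓ)
    (hx3 : ∀ i : Fin n, i ≠ z → i ≠ ℓ → ⁅x i, x ℓ⁆ = -lam • x i)
    (hx4 : ∀ i j : Fin n, i ≠ z → i ≠ ℓ → j ≠ z → j ≠ ℓ → ⁅x i, x j⁆ = 0)
    (D : L → L → L)
    (hKoszul : ∀ X Y Z : L,
      2 * B (D X Y) Z = B ⁅X, Y⁆ Z + B ⁅Z, X⁆ Y + B X ⁅Z, Y⁆) :
    D (x z) (x z) = (lam * ε z * ε ℓ) • x ℓ ∧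
    (∀ i : Fin n, i ≠ z → i ≠ ℓ → D (x z) (x i) = 0) ∧
    D (x z) (x ℓ) = -lam • x z ∧
    (∀ i : Fin n, i ≠ z → i ≠ ℓ → D (x i) (x z) = -(x i)) ∧
    (∀ i j : Fin n, i ≠ z → i ≠ ℓ → j ≠ z → j ≠ ℓ →
      D (x i) (x j) = (if i = j then (1 : ℝ) else 0) •
        (ε i • (ε z • x z + (lam * ε ℓ) • x ℓ))) ∧
    (∀ i : Fin n, i ≠ z → i ≠ ℓ → D (x i) (x ℓ) = -lam • x i) ∧
    D (x ℓ) (x z) = -(x ℓ) ∧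
    (∀ i : Fin n, i ≠ z → i ≠ ℓ → D (x ℓ) (x i) = 0) ∧
    D (x ℓ) (x ℓ) = (ε z * ε ℓ) • x z := by
  have hzℓ : z ≠ ℓ := by
    intro h
    have : (z : ℕ) = (ℓ : ℕ) := by rw [h]
    omega
  have hεne : ∀ i, ε i ≠ 0 := by
    intro i; rcases hε i with h | h <;> rw [h] <;> norm_num
  have hBv : ∀ (v : L) (k : Fin n), B v (x k) = x.repr v k * ε k := by
    intro v k
    conv_lhs => rw [← x.sum_repr v]
    rw [map_sum, LinearMap.sum_apply]
    simp [hortho, mul_ite, Finset.sum_ite_eq']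
  have hext : ∀ v w : L, (∀ k, B v (x k) = B w (x k)) → v = w := by
    intro v w h
    apply x.repr.injective
    ext k
    have hk := h k
    rw [hBv, hBv] at hk
    exact mul_right_cancel₀ (hεne k) hk
  have key : ∀ X Y W : L,
      (∀ k, B ⁅X, Y⁆ (x k) + B ⁅x k, X⁆ Y + B X ⁅x k, Y⁆ = 2 * B W (x k)) →
      D X Y = W := by
    intro X Y W h
    apply hext
    intro k
    have h2 := hKoszul X Y (x k)
    have h3 := h k
    rw [h3] at h2
    linarith
  have b1 : ⁅x z, x z⁆ = (0 : L) := lie_self _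
  have b9 : ⁅x ℓ, x ℓ⁆ = (0 : L) := lie_self _
  have b4 : ∀ i : Fin n, i ≠ z → i ≠ ℓ → ⁅x i, x z⁆ = -(x i) := by
    intro i hiz hiℓ
    rw [← lie_skew, hx1 i hiz hiℓ]
  have b7 : ⁅x ℓ, x z⁆ = lam • x z - x ℓ := by
    rw [← lie_skew, hx2]; module
  have b8 : ∀ i : Fin n, i ≠ z → i ≠ ℓ → ⁅x ℓ, x i⁆ = lam • x i := by
    intro i hiz hiℓ
    rw [← lie_skew, hx3 i hiz hiℓ]; module
  refine ⟨?_, ?_, ?_, ?_, ?_, ?_, ?_, ?_, ?_⟩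
  · -- D z z
    apply key
    intro k
    rcases eq_or_ne z k with rfl | hkz
    · simp [b1, hortho, hzℓ, Ne.symm hzℓ]
    rcases eq_or_ne ℓ k with rfl | hkℓ
    · simp [b1, b7, hortho, hzℓ, Ne.symm hzℓ, map_sub, map_smul]
        <;> (rcases hε z with h1 | h1 <;> rcases hε ℓ with h2 | h2 <;>
              simp [h1, h2, hortho] <;> ring)
    · simp [b1, b4 k (Ne.symm hkz) (Ne.symm hkℓ), hortho, hkz, hkℓ, Ne.symm hkz,
        Ne.symm hkℓ, hzℓ, Ne.symm hzℓ]
  · -- D z i = 0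
    intro i hiz hiℓ
    apply key
    intro k
    rcases eq_or_ne z k with rfl | hkz
    · simp [b1, hx1 i hiz hiℓ, hortho, hiz, Ne.symm hiz]
    rcases eq_or_ne ℓ k with rfl | hkℓ
    · simp [hx1 i hiz hiℓ, b7, b8 i hiz hiℓ, hortho, hiℓ, Ne.symm hiℓ, hzℓ,
        Ne.symm hzℓ, hiz, Ne.symm hiz, map_sub, map_smul] <;> ring
    · rcases eq_or_ne i k with rfl | hki
      · simp [hx1 i hiz hiℓ, b4 i hiz hiℓ, b1, hortho, hx4 i i hiz hiℓ hiz hiℓ]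
      · simp [hx1 i hiz hiℓ, b4 k (Ne.symm hkz) (Ne.symm hkℓ),
          hx4 k i (Ne.symm hkz) (Ne.symm hkℓ) hiz hiℓ, hortho, hki, Ne.symm hki,
          hkz, hkℓ, Ne.symm hkz, Ne.symm hkℓ]
  · -- D z ℓ
    apply key
    intro k
    rcases eq_or_ne z k with rfl | hkz
    · simp [hx2, b1, hortho, hzℓ, Ne.symm hzℓ, map_add, map_smul] <;> ring
    rcases eq_or_ne ℓ k with rfl | hkℓ
    · simp [hx2, b7, b9, hortho, hzℓ, Ne.symm hzℓ, map_add, map_sub, map_smul] <;> ring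
    · simp [hx2, b4 k (Ne.symm hkz) (Ne.symm hkℓ), hx3 k (Ne.symm hkz) (Ne.symm hkℓ),
        hortho, hkz, hkℓ, Ne.symm hkz, Ne.symm hkℓ, hzℓ, Ne.symm hzℓ, map_add, map_smul]
  · -- D i z
    intro i hiz hiℓ
    apply key
    intro k
    rcases eq_or_ne z k with rfl | hkz
    · simp [b4 i hiz hiℓ, b1, hx1 i hiz hiℓ, hortho, hiz, Ne.symm hiz]
    rcases eq_or_ne ℓ k with rfl | hkℓ
    · simp [b4 i hiz hiℓ, b8 i hiz hiℓ, b7, hortho, hiz, hiℓ, Ne.symm hiz,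
        Ne.symm hiℓ, hzℓ, Ne.symm hzℓ, map_sub, map_smul] <;> ring
    · rcases eq_or_ne i k with rfl | hki
      · simp [b4 i hiz hiℓ, hx4 i i hiz hiℓ hiz hiℓ, hortho] <;> ring
      · simp [b4 i hiz hiℓ, hx4 k i (Ne.symm hkz) (Ne.symm hkℓ) hiz hiℓ,
          b4 k (Ne.symm hkz) (Ne.symm hkℓ), hortho, hki, Ne.symm hki, hkz, hkℓ,
          Ne.symm hkz, Ne.symm hkℓ]
  · -- D i j
    intro i j hiz hiℓ hjz hjℓ
    rcases eq_or_ne i j with rfl | hij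
    · rw [if_pos rfl, one_smul]
      apply key
      intro k
      rcases eq_or_ne z k with rfl | hkz
      · simp [hx4 i i hiz hiℓ hiz hiℓ, hx1 i hiz hiℓ, hortho, hiz, Ne.symm hiz,
          hzℓ, Ne.symm hzℓ, map_add, map_smul]
          <;> (rcases hε z with h1 | h1 <;> simp [h1, hortho] <;> ring)
      rcases eq_or_ne ℓ k with rfl | hkℓ
      · simp [hx4 i i hiz hiℓ hiz hiℓ, b8 i hiz hiℓ, hortho, hiℓ, Ne.symm hiℓ,
          hzℓ, Ne.symm hzℓ, map_add, map_smul]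
          <;> (rcases hε ℓ with h2 | h2 <;> simp [h2, hortho] <;> ring)
      · rcases eq_or_ne i k with rfl | hki
        · simp [hx4 i i hiz hiℓ hiz hiℓ, hortho, hkz, hkℓ, Ne.symm hkz, Ne.symm hkℓ,
            hzℓ, Ne.symm hzℓ, map_add, map_smul]
        · simp [hx4 i i hiz hiℓ hiz hiℓ, hx4 k i (Ne.symm hkz) (Ne.symm hkℓ) hiz hiℓ,
            hortho, hki, Ne.symm hki, hkz, hkℓ, Ne.symm hkz, Ne.symm hkℓ, hzℓ,
            Ne.symm hzℓ, map_add, map_smul]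
    · rw [if_neg hij, zero_smul]
      apply key
      intro k
      rcases eq_or_ne z k with rfl | hkz
      · simp [hx4 i j hiz hiℓ hjz hjℓ, hx1 i hiz hiℓ, hx1 j hjz hjℓ, hortho, hiz,
          hjz, Ne.symm hiz, Ne.symm hjz, hij, Ne.symm hij]
      rcases eq_or_ne ℓ k with rfl | hkℓ
      · simp [hx4 i j hiz hiℓ hjz hjℓ, b8 i hiz hiℓ, b8 j hjz hjℓ, hortho, hiℓ,
          hjℓ, Ne.symm hiℓ, Ne.symm hjℓ, hij, Ne.symm hij, map_smul]
      · rcases eq_or_ne i k with rfl | hki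
        · simp [hx4 i j hiz hiℓ hjz hjℓ, hx4 i i hiz hiℓ hiz hiℓ,
            hx4 i j hiz hiℓ hjz hjℓ, hortho, hij, Ne.symm hij]
        · rcases eq_or_ne j k with rfl | hkj
          · simp [hx4 i j hiz hiℓ hjz hjℓ, hx4 j i hjz hjℓ hiz hiℓ,
              hx4 j j hjz hjℓ hjz hjℓ, hortho, hij, Ne.symm hij]
          · simp [hx4 i j hiz hiℓ hjz hjℓ, hx4 k i (Ne.symm hkz) (Ne.symm hkℓ) hiz hiℓ,
              hx4 k j (Ne.symm hkz) (Ne.symm hkℓ) hjz hjℓ, hortho]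
  · -- D i ℓ
    intro i hiz hiℓ
    apply key
    intro k
    rcases eq_or_ne z k with rfl | hkz
    · simp [hx3 i hiz hiℓ, hx1 i hiz hiℓ, hx2, hortho, hiz, Ne.symm hiz, hiℓ, Ne.symm hiℓ, hzℓ,
        Ne.symm hzℓ, map_add, map_smul]
    rcases eq_or_ne ℓ k with rfl | hkℓ
    · simp [hx3 i hiz hiℓ, b8 i hiz hiℓ, b9, hortho, hiℓ, Ne.symm hiℓ, map_smul] <;> ring
    · rcases eq_or_ne i k with rfl | hki
      · simp [hx3 i hiz hiℓ, hx4 i i hiz hiℓ hiz hiℓ, hortho, map_smul] <;> ring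
      · simp [hx3 i hiz hiℓ, hx4 k i (Ne.symm hkz) (Ne.symm hkℓ) hiz hiℓ,
          hx3 k (Ne.symm hkz) (Ne.symm hkℓ), hortho, hki, Ne.symm hki, hkz, hkℓ,
          Ne.symm hkz, Ne.symm hkℓ, map_smul]
  · -- D ℓ z
    apply key
    intro k
    rcases eq_or_ne z k with rfl | hkz
    · simp [b7, b1, hx2, hortho, hzℓ, Ne.symm hzℓ, map_add, map_sub, map_smul] <;> ring
    rcases eq_or_ne ℓ k with rfl | hkℓ
    · simp [b7, b9, hortho, hzℓ, Ne.symm hzℓ, map_sub, map_smul] <;> ring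
    · simp [b7, hx3 k (Ne.symm hkz) (Ne.symm hkℓ), b4 k (Ne.symm hkz) (Ne.symm hkℓ),
        hortho, hkz, hkℓ, Ne.symm hkz, Ne.symm hkℓ, hzℓ, Ne.symm hzℓ,
        map_sub, map_smul]
  · -- D ℓ i = 0
    intro i hiz hiℓ
    apply key
    intro k
    rcases eq_or_ne z k with rfl | hkz
    · simp [b8 i hiz hiℓ, hx2, hx1 i hiz hiℓ, hortho, hiz, Ne.symm hiz, hiℓ, Ne.symm hiℓ, hzℓ,
        Ne.symm hzℓ, map_add, map_smul] <;> ring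
    rcases eq_or_ne ℓ k with rfl | hkℓ
    · simp [b8 i hiz hiℓ, b9, hortho, hiℓ, Ne.symm hiℓ, map_smul]
    · rcases eq_or_ne i k with rfl | hki
      · simp [b8 i hiz hiℓ, hx3 i hiz hiℓ, hx4 i i hiz hiℓ hiz hiℓ, hortho,
          map_smul] <;> ring
      · simp [b8 i hiz hiℓ, hx3 k (Ne.symm hkz) (Ne.symm hkℓ),
          hx4 k i (Ne.symm hkz) (Ne.symm hkℓ) hiz hiℓ, hortho, hki, Ne.symm hki,
          hkz, hkℓ, Ne.symm hkz, Ne.symm hkℓ, map_smul]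
  · -- D ℓ ℓ
    apply key
    intro k
    rcases eq_or_ne z k with rfl | hkz
    · simp [b9, hx2, hortho, hzℓ, Ne.symm hzℓ, map_add, map_smul]
        <;> (rcases hε z with h1 | h1 <;> simp [h1, hortho] <;> ring)
    rcases eq_or_ne ℓ k with rfl | hkℓ
    · simp [b9, hortho, hzℓ, Ne.symm hzℓ]
    · simp [b9, hx3 k (Ne.symm hkz) (Ne.symm hkℓ), hortho, hkz, hkℓ, Ne.symm hkz,
        Ne.symm hkℓ, hzℓ, Ne.symm hzℓ, map_smul]
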